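/- Let n ≥ 4 be a natural number and define F(c) = (1+c)(1 − c^{2n+1})(2n−1) + (1+c³)(c^{2n−1} − 1)(2n+1). Then there exists a real number c > 1 with F(c) = 0. -/

import Mathlib

/-- Case `ε = 0`, `s = 0`, `n ≥ 4`: the polynomial `F` has a real root `c > 1`. -/
theorem stmt_19 (n : ℕ) (hn : 4 ≤ n) (F : ℝ → ℝ)
    (hF : ∀ c : ℝ, F c =
      (1 + c) * (1 - c ^ (2 * n + 1)) * (2 * (n : ℝ) - 1)
        + (1 + c ^ 3) * (c ^ (2 * n - 1) - 1) * (2 * (n : ℝ) + 1)) :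
    ∃ c : ℝ, 1 < c ∧ F c = 0 := by
  have hn4 : (4 : ℝ) ≤ (n : ℝ) := by exact_mod_cast hn
  have hsplit : 2 * n + 1 = (2 * n - 1) + 2 := by omega
  -- F 2 < 0
  have h2 : F 2 < 0 := by
    rw [hF]
    set x : ℝ := (2 : ℝ) ^ (2 * n - 1) with hx
    have hpow : (2 : ℝ) ^ (2 * n + 1) = x * 4 := by
      rw [hsplit, pow_add]; norm_num; exact hx.symm
    have hx1 : (1 : ℝ) ≤ x := one_le_pow₀ (by norm_num)
    rw [hpow]
    nlinarith [hx1, hn4]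
  -- F (2n) > 0
  have hc8 : (8 : ℝ) ≤ 2 * (n : ℝ) := by linarith
  have h2n : 0 < F (2 * (n : ℝ)) := by
    rw [hF]
    set c : ℝ := 2 * (n : ℝ) with hcdef
    set y : ℝ := c ^ (2 * n - 1) with hy
    have hpow : c ^ (2 * n + 1) = y * c ^ 2 := by
      rw [hsplit, pow_add]
    have hyc3 : c ^ 3 ≤ y := by
      apply pow_le_pow_right₀ (by linarith)
      omega
    have hc3 : (0:ℝ) < c ^ 3 := by positivity
    rw [hpow]
    have hkey : (1 + c) * (1 - y * c ^ 2) * (2 * (n : ℝ) - 1)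
        + (1 + c ^ 3) * (y - 1) * (2 * (n : ℝ) + 1)
        = (2 * (n : ℝ) + 1) * ((1 + c ^ 2) * y - (1 + c ^ 3))
          + (2 * (n : ℝ) - 1) * (1 + c) := by
      rw [hcdef]; ring
    rw [hkey]
    nlinarith [hyc3, hc8, hc3]
  -- continuity
  have hFeq : F = fun c : ℝ => (1 + c) * (1 - c ^ (2 * n + 1)) * (2 * (n : ℝ) - 1)
        + (1 + c ^ 3) * (c ^ (2 * n - 1) - 1) * (2 * (n : ℝ) + 1) := funext hF
  have hcont : Continuous F := by rw [hFeq]; fun_prop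
  have hle : (2 : ℝ) ≤ 2 * (n : ℝ) := by linarith
  have := intermediate_value_Icc hle hcont.continuousOn
  have h0 : (0 : ℝ) ∈ Set.Icc (F 2) (F (2 * (n : ℝ))) := ⟨le_of_lt h2, le_of_lt h2n⟩
  obtain ⟨c, hcmem, hc0⟩ := this h0
  exact ⟨c, by linarith [hcmem.1], hc0⟩
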